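/- (Construction of an extension from a vanishing obstruction, part of Theorem 5.) In the pre-extension setting, assume additionally the normalization conditions f(x,0) = f(0,y) = 0 and g(x,0) = g(0,y) = g(1,y) = g(y,1) = 0 for all x, y ∈ R, and assume that ξ, η, α, λ, ρ are identically zero. Then the set S = A × R with operations (a,x) + (b,y) = (a + b + f(x,y), x+y) and (a,x)·(b,y) = (a·b + φ_x(b) + ψ_y(a) + g(x,y), xy) is a ring with additive identity (0,0) and multiplicative identity (0,1); the projection σ : S → R, σ(a,x) = x, is a surjective ring homomorphism with σ(0,1) = 1; its kernel is A × {0}; and the map a ↦ (a,0) is an isomorphism of rings from A onto this kernel. -/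
import Mathlib


variable {R A : Type*}

/-- The bicenter `K_A = {c ∈ A : c·a = 0 = a·c for all a}`. -/
def bicenter (A : Type*) [NonUnitalRing A] : Set A :=
  {c | ∀ b : A, c * b = 0 ∧ b * c = 0}

/-- A pre-extension datum `(φ, ψ, f, g)` of the ring `A` by the ring `R`:
`φ_x, ψ_x ∈ End_ℤ(A)` and `f, g : R² → A` satisfying the relations (10) and the
defining relations of the factor sets. -/
def IsPreExtension [Ring R] [NonUnitalRing A]
    (φ ψ : R → AddMonoid.End A) (f g : R → R → A) : Prop :=
  (∀ a : A, φ 1 a = a) ∧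
  (∀ a : A, ψ 1 a = a) ∧
  (∀ (x : R) (a b : A), a * φ x b = ψ x a * b) ∧
  (∀ (x : R) (a b : A), φ x (a * b) = φ x a * b) ∧
  (∀ (x : R) (a b : A), ψ x (b * a) = b * ψ x a) ∧
  (∀ (x : R) (a b : A), ψ x b * a = b * φ x a) ∧
  (∀ (x y : R) (a : A), φ x (ψ y a) = ψ y (φ x a)) ∧
  (∀ (x y : R) (a : A), φ x (φ y a) = φ (x * y) a + g x y * a) ∧
  (∀ (x y : R) (a : A), ψ y (ψ x a) = ψ (x * y) a + a * g x y) ∧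
  (∀ (x y : R) (a : A), φ x a + φ y a = φ (x + y) a + f x y * a) ∧
  (∀ (x y : R) (a : A), ψ x a + ψ y a = ψ (x + y) a + a * f x y)

variable [Ring R] [NonUnitalRing A]

/-- The obstruction component `ξ`. -/
def xiObs (f : R → R → A) (x y z : R) : A :=
  f y z - f (x + y) z + f x (y + z) - f x y

/-- The obstruction component `η`. -/
def etaObs (f : R → R → A) (x y : R) : A :=
  f x y - f y x

/-- The obstruction component `α`. -/
def alphaObs (φ ψ : R → AddMonoid.End A) (g : R → R → A) (x y z : R) : A :=
  φ x (g y z) - g (x * y) z + g x (y * z) - ψ z (g x y)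

/-- The obstruction component `λ`. -/
def lambdaObs (φ : R → AddMonoid.End A) (f g : R → R → A) (x y z : R) : A :=
  φ x (f y z) - f (x * y) (x * z) + g x (y + z) - g x y - g x z

/-- The obstruction component `ρ`. -/
def rhoObs (ψ : R → AddMonoid.End A) (f g : R → R → A) (x y z : R) : A :=
  ψ z (f x y) - f (x * z) (y * z) + g (x + y) z - g x z - g y z

/-- part of Theorem 5: if the obstruction of a (normalized)
pre-extension datum vanishes identically, then the crossed-product operations make
`S = A × R` a ring; the projection onto `R` is a surjective ring homomorphism
sending `(0,1)` to `1`, its kernel is `A × {0}`, and `a ↦ (a,0)` is a ring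
isomorphism of `A` onto this kernel. -/
theorem extension_from_vanishing_obstruction
    [Nontrivial R] (φ ψ : R → AddMonoid.End A) (f g : R → R → A)
    (h : IsPreExtension φ ψ f g)
    -- normalization conditions
    (hf0 : ∀ x y : R, f x 0 = 0 ∧ f 0 y = 0)
    (hg0 : ∀ x y : R, g x 0 = 0 ∧ g 0 y = 0 ∧ g 1 y = 0 ∧ g y 1 = 0)
    -- vanishing obstruction
    (hxi : ∀ x y z : R, xiObs f x y z = 0)
    (heta : ∀ x y : R, etaObs f x y = 0)
    (halpha : ∀ x y z : R, alphaObs φ ψ g x y z = 0)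
    (hlambda : ∀ x y z : R, lambdaObs φ f g x y z = 0)
    (hrho : ∀ x y z : R, rhoObs ψ f g x y z = 0)
    -- the crossed-product operations on S = A × R
    (add' mul' : A × R → A × R → A × R)
    (hadd' : ∀ p q : A × R, add' p q = (p.1 + q.1 + f p.2 q.2, p.2 + q.2))
    (hmul' : ∀ p q : A × R,
      mul' p q = (p.1 * q.1 + φ p.2 q.1 + ψ q.2 p.1 + g p.2 q.2, p.2 * q.2)) :
    -- S is a ring:
    (∀ p q r : A × R, add' (add' p q) r = add' p (add' q r)) ∧
    (∀ p q : A × R, add' p q = add' q p) ∧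
    (∀ p : A × R, add' ((0 : A), (0 : R)) p = p) ∧
    (∀ p : A × R, ∃ q : A × R, add' p q = ((0 : A), (0 : R))) ∧
    (∀ p q r : A × R, mul' (mul' p q) r = mul' p (mul' q r)) ∧
    (∀ p : A × R, mul' ((0 : A), (1 : R)) p = p ∧ mul' p ((0 : A), (1 : R)) = p) ∧
    (∀ p q r : A × R, mul' p (add' q r) = add' (mul' p q) (mul' p r)) ∧
    (∀ p q r : A × R, mul' (add' p q) r = add' (mul' p r) (mul' q r)) ∧
    -- the projection σ(a, x) = x is a surjective ring homomorphism with σ(0,1) = 1: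
    (∀ x : R, ∃ p : A × R, p.2 = x) ∧
    (∀ p q : A × R, (add' p q).2 = p.2 + q.2) ∧
    (∀ p q : A × R, (mul' p q).2 = p.2 * q.2) ∧
    (((0 : A), (1 : R)).2 = (1 : R)) ∧
    -- its kernel is A × {0}:
    (∀ p : A × R, p.2 = 0 ↔ ∃ a : A, p = (a, (0 : R))) ∧
    -- a ↦ (a, 0) is a ring isomorphism of A onto the kernel:
    (∀ a b : A, add' (a, (0 : R)) (b, (0 : R)) = (a + b, (0 : R))) ∧
    (∀ a b : A, mul' (a, (0 : R)) (b, (0 : R)) = (a * b, (0 : R))) ∧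
    (Function.Injective fun a : A => ((a, (0 : R)) : A × R)) ∧
    (Set.range (fun a : A => ((a, (0 : R)) : A × R)) = {p : A × R | p.2 = 0}) := by
  obtain ⟨h1, h2, h3, h4, h5, h6, h7, h8, h9, h10, h11⟩ := h
  have hphi0 : ∀ a : A, φ 0 a = 0 := by
    intro a
    have := h10 0 0 a
    rw [(hf0 0 0).1, zero_mul, add_zero, add_zero] at this
    exact add_eq_left.mp this
  have hpsi0 : ∀ a : A, ψ 0 a = 0 := by
    intro a
    have := h11 0 0 a
    rw [(hf0 0 0).1, mul_zero, add_zero, add_zero] at this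
    exact add_eq_left.mp this
  refine ⟨?_, ?_, ?_, ?_, ?_, ?_, ?_, ?_, ?_, ?_, ?_, rfl, ?_, ?_, ?_, ?_, ?_⟩
  · intro p q r
    simp only [hadd']
    refine Prod.ext ?_ (add_assoc _ _ _)
    have key : f q.2 r.2 - f (p.2 + q.2) r.2 + f p.2 (q.2 + r.2) = f p.2 q.2 := by
      have := hxi p.2 q.2 r.2
      simp only [xiObs] at this
      exact sub_eq_zero.mp this
    simp only
    rw [← key]; abel
  · intro p q
    simp only [hadd']
    have key : f p.2 q.2 = f q.2 p.2 := by
      have := heta p.2 q.2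
      simp only [etaObs] at this
      exact sub_eq_zero.mp this
    rw [key]
    refine Prod.ext ?_ (add_comm _ _)
    simp only; abel
  · intro p
    simp only [hadd', (hf0 0 p.2).2, zero_add, add_zero]
  · intro p
    refine ⟨(-(p.1) - f p.2 (-p.2), -p.2), ?_⟩
    simp only [hadd']
    refine Prod.ext ?_ (add_neg_cancel _)
    simp only; abel
  · intro p q r
    obtain ⟨a, x⟩ := p; obtain ⟨b, y⟩ := q; obtain ⟨c, z⟩ := r
    simp only [hmul']
    refine Prod.ext ?_ (mul_assoc _ _ _)
    simp only
    have key : ψ z (g x y) = φ x (g y z) - g (x * y) z + g x (y * z) := by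
      have := halpha x y z
      simp only [alphaObs] at this
      exact (sub_eq_zero.mp this).symm
    rw [add_mul, add_mul, add_mul, map_add, map_add, map_add,
      mul_add, mul_add, mul_add, map_add, map_add, map_add,
      h4 x b c, h6 y c a, h8 x y c, h5 z b a, h9 y z a, ← h7 x z b, key, mul_assoc a b c]
    abel
  · intro p
    obtain ⟨a, x⟩ := p
    constructor
    · simp only [hmul', zero_mul, h1, map_zero, (hg0 0 x).2.2.1, one_mul,
        add_zero, zero_add]
    · simp only [hmul', mul_zero, map_zero, h2, (hg0 0 x).2.2.2, mul_one,
        add_zero, zero_add]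
  · intro p q r
    obtain ⟨a, x⟩ := p; obtain ⟨b, y⟩ := q; obtain ⟨c, z⟩ := r
    simp only [hmul', hadd']
    refine Prod.ext ?_ (mul_add _ _ _)
    simp only
    have key : φ x (f y z) = f (x * y) (x * z) - g x (y + z) + g x y + g x z := by
      have := hlambda x y z
      simp only [lambdaObs] at this
      have := sub_eq_zero.mp (by rw [← this]; abel :
        φ x (f y z) - (f (x * y) (x * z) - g x (y + z) + g x y + g x z) = 0)
      exact this
    have key2 : ψ (y + z) a = ψ y a + ψ z a - a * f y z :=
      eq_sub_of_add_eq (h11 y z a).symm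
    rw [mul_add, mul_add, map_add, map_add, key, key2]
    abel
  · intro p q r
    obtain ⟨a, x⟩ := p; obtain ⟨b, y⟩ := q; obtain ⟨c, z⟩ := r
    simp only [hmul', hadd']
    refine Prod.ext ?_ (add_mul _ _ _)
    simp only
    have key : ψ z (f x y) = f (x * z) (y * z) - g (x + y) z + g x z + g y z := by
      have := hrho x y z
      simp only [rhoObs] at this
      exact sub_eq_zero.mp (by rw [← this]; abel :
        ψ z (f x y) - (f (x * z) (y * z) - g (x + y) z + g x z + g y z) = 0)
    have key2 : φ (x + y) c = φ x c + φ y c - f x y * c :=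
      eq_sub_of_add_eq (h10 x y c).symm
    rw [add_mul, add_mul, map_add, map_add, key, key2]
    abel
  · intro x; exact ⟨((0 : A), x), rfl⟩
  · intro p q; rw [hadd']
  · intro p q; rw [hmul']
  · intro p
    constructor
    · intro hp; exact ⟨p.1, by rw [← hp]⟩
    · rintro ⟨a, rfl⟩; rfl
  · intro a b
    simp only [hadd', (hf0 0 0).1, add_zero]
  · intro a b
    simp only [hmul', hphi0, hpsi0, (hg0 0 0).1, add_zero, mul_zero]
  · intro a b hab
    simpa using congrArg Prod.fst hab
  · ext p
    constructor
    · rintro ⟨a, rfl⟩; rfl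
    · intro hp
      exact ⟨p.1, by rw [← hp]⟩
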